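/- arXiv:1004.3220 — 2 statements merged into one kernel-verified Lean document; each statement's English description precedes it below -/
import Mathlib

section
/- For every r ≥ 1, G_r(t,u,1,z) = t^{r+1}·z^r·u·(1-u)·Σ_{s≥0} u^s·(1-t)^s·δ_s^{-1}·δ_{s+1}^{-1}·Π_{i=1}^{s+1} γ_i^{-1}, where the infinite sum converges in the formal power series ring ℚ⟦t,u,v,z⟧ (the s-th summand is divisible by u^s). -/
/-!
STATEMENT 3: For every r ≥ 1,
G_r(t,u,1,z) = t^{r+1}·z^r·u·(1-u)·Σ_{s≥0} u^s·(1-t)^s·δ_s⁻¹·δ_{s+1}⁻¹·Π_{i=1}^{s+1} γ_i⁻¹,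
the infinite sum converging in the formal power series ring ℚ⟦t,u,v,z⟧.
-/

/-- Number of ascents of a finite sequence of naturals. -/
def ascents (l : List ℕ) : ℕ := (l.zip l.tail).countP fun p => decide (p.1 < p.2)

/-- `l` is an ascent sequence: `x₁ = 0` and `xᵢ ∈ [0, 1 + asc(x₁,…,x_{i-1})]`.
The empty sequence is an ascent sequence. -/
def IsAscentSeq (l : List ℕ) : Prop :=
  ∀ i (h : i < l.length), l.get ⟨i, h⟩ ≤ if i = 0 then 0 else ascents (l.take i) + 1

/-- The number of 0's to the left of the leftmost nonzero entry
(0 if there is no nonzero entry). -/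
def runZeros (l : List ℕ) : ℕ :=
  if l.all (· == 0) then 0 else (l.takeWhile (· == 0)).length

/-- `HasPSSum f S` : the (possibly infinite) family `f` of formal power series is
summable in the formal power series topology (coefficientwise, only finitely many
terms contribute to each coefficient) and its sum is `S`. -/
def HasPSSum {ι : Type*} {σ : Type*} (f : ι → MvPowerSeries σ ℚ) (S : MvPowerSeries σ ℚ) : Prop :=
  ∀ e : σ →₀ ℕ, ∃ A : Finset ι, (∀ i ∉ A, MvPowerSeries.coeff e (f i) = 0) ∧
    MvPowerSeries.coeff e S = ∑ i ∈ A, MvPowerSeries.coeff e (f i)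

open MvPowerSeries

/-- The variable `t` in `ℚ⟦t,u,v,z⟧`. -/
noncomputable def T : MvPowerSeries (Fin 4) ℚ := X 0
/-- The variable `u` in `ℚ⟦t,u,v,z⟧`. -/
noncomputable def U : MvPowerSeries (Fin 4) ℚ := X 1
/-- The variable `v` in `ℚ⟦t,u,v,z⟧`. -/
noncomputable def V : MvPowerSeries (Fin 4) ℚ := X 2
/-- The variable `z` in `ℚ⟦t,u,v,z⟧`. -/
noncomputable def Z : MvPowerSeries (Fin 4) ℚ := X 3

/-- `G_r(t,u,v,z) = Σ_w t^{length(w)} u^{asc(w)} v^{last(w)} z^{zeros(w)}` over all ascent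
sequences `w` with initial run of zeros equal to `r`. -/
noncomputable def Gr (r : ℕ) : MvPowerSeries (Fin 4) ℚ :=
  fun d => (Nat.card {l : List ℕ // IsAscentSeq l ∧ runZeros l = r ∧ l.length = d 0 ∧
    ascents l = d 1 ∧ l.getLast? = some (d 2) ∧ l.count 0 = d 3} : ℚ)

/-- `G_r(t,u,1,z)` : the series `G_r` with `v` specialized to `1`. -/
noncomputable def GrOne (r : ℕ) : MvPowerSeries (Fin 4) ℚ :=
  fun d => if d 2 = 0 then
    (Nat.card {l : List ℕ // IsAscentSeq l ∧ runZeros l = r ∧ l.length = d 0 ∧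
      ascents l = d 1 ∧ l.count 0 = d 3} : ℚ)
  else 0

/-- `δ_0 = 1` and `δ_k = u - (1-t)^k (u-1)` for `k ≥ 1`. -/
noncomputable def deltaS : ℕ → MvPowerSeries (Fin 4) ℚ
  | 0 => 1
  | k + 1 => U - (1 - T) ^ (k + 1) * (U - 1)

/-- `γ_0 = 1` and `γ_k = u - (1-zt)(1-t)^{k-1} (u-1)` for `k ≥ 1`. -/
noncomputable def gammaS : ℕ → MvPowerSeries (Fin 4) ℚ
  | 0 => 1
  | k + 1 => U - (1 - Z * T) * (1 - T) ^ k * (U - 1)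


namespace AuxGF
open MvPowerSeries Finset

abbrev PS := MvPowerSeries (Fin 4) ℚ

/-- Slice families vanishing in coordinate `j` below the slice index. -/
def SliceOK (j : Fin 4) (g : ℕ → PS) : Prop :=
  ∀ n (e : Fin 4 →₀ ℕ), e j < n → MvPowerSeries.coeff e (g n) = 0

/-- The sum of a slice family, defined coefficientwise. -/
noncomputable def Tot (j : Fin 4) (g : ℕ → PS) : PS :=
  fun e => ∑ n ∈ Finset.range (e j + 1), MvPowerSeries.coeff e (g n)

lemma coeff_tot (j : Fin 4) (g : ℕ → PS) (e : Fin 4 →₀ ℕ) :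
    MvPowerSeries.coeff e (Tot j g) = ∑ n ∈ Finset.range (e j + 1),
      MvPowerSeries.coeff e (g n) := rfl

lemma coeff_tot_of_le {j : Fin 4} {g : ℕ → PS} (hg : SliceOK j g)
    {e : Fin 4 →₀ ℕ} {N : ℕ} (hN : e j + 1 ≤ N) :
    MvPowerSeries.coeff e (Tot j g) = ∑ n ∈ Finset.range N,
      MvPowerSeries.coeff e (g n) := by
  rw [coeff_tot]
  apply Finset.sum_subset (Finset.range_subset_range.2 hN)
  intro n _ hn
  exact hg n e (by simpa using hn)

lemma coeff_Xpow_mul_eq_zero {j : Fin 4} {n : ℕ} {e : Fin 4 →₀ ℕ} (h : e j < n) (f : PS) :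
    MvPowerSeries.coeff e ((X j : PS) ^ n * f) = 0 := by
  classical
  rw [coeff_mul]
  apply Finset.sum_eq_zero
  rintro ⟨p, q⟩ hpq
  rw [Finset.HasAntidiagonal.mem_antidiagonal] at hpq
  rw [coeff_X_pow, if_neg, zero_mul]
  rintro rfl
  have : n ≤ e j := by rw [← hpq]; simp
  omega

lemma sliceOK_mulC {j : Fin 4} {g : ℕ → PS} (hg : SliceOK j g) (C : PS) :
    SliceOK j (fun n => C * g n) := by
  classical
  intro n e he
  rw [coeff_mul]
  apply Finset.sum_eq_zero
  rintro ⟨p, q⟩ hpq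
  rw [Finset.HasAntidiagonal.mem_antidiagonal] at hpq
  have hq : q j ≤ e j := by rw [← hpq]; simp
  rw [hg n q (lt_of_le_of_lt hq he), mul_zero]

lemma tot_mulC {j : Fin 4} {g : ℕ → PS} (hg : SliceOK j g) (C : PS) :
    Tot j (fun n => C * g n) = C * Tot j g := by
  classical
  ext e
  rw [coeff_tot, MvPowerSeries.coeff_mul]
  have key : ∀ p ∈ Finset.HasAntidiagonal.antidiagonal e, (MvPowerSeries.coeff p.1 C) *
      MvPowerSeries.coeff p.2 (Tot j g) = ∑ n ∈ Finset.range (e j + 1),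
        (MvPowerSeries.coeff p.1 C) * MvPowerSeries.coeff p.2 (g n) := by
    rintro ⟨p, q⟩ hpq
    rw [Finset.HasAntidiagonal.mem_antidiagonal] at hpq
    have hq : q j ≤ e j := by rw [← hpq]; simp
    rw [coeff_tot_of_le hg (show q j + 1 ≤ e j + 1 by omega), Finset.mul_sum]
  rw [Finset.sum_congr rfl key, Finset.sum_comm]
  apply Finset.sum_congr rfl
  intro n _
  rw [MvPowerSeries.coeff_mul]

lemma tot_add {j : Fin 4} (g h : ℕ → PS) :
    Tot j (fun n => g n + h n) = Tot j g + Tot j h := by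
  ext e
  show _ = MvPowerSeries.coeff e (Tot j g) + MvPowerSeries.coeff e (Tot j h)
  simp only [coeff_tot, map_add, Finset.sum_add_distrib]

lemma tot_sub {j : Fin 4} (g h : ℕ → PS) :
    Tot j (fun n => g n - h n) = Tot j g - Tot j h := by
  ext e
  show _ = MvPowerSeries.coeff e (Tot j g) - MvPowerSeries.coeff e (Tot j h)
  simp only [coeff_tot, map_sub, Finset.sum_sub_distrib]

lemma tot_shift {j : Fin 4} {g : ℕ → PS} (hg : SliceOK j g) :
    Tot j g = g 0 + Tot j (fun n => g (n + 1)) := by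
  ext e
  have h1 : MvPowerSeries.coeff e (Tot j (fun n => g (n+1))) =
      ∑ n ∈ Finset.range (e j), MvPowerSeries.coeff e (g (n+1)) := by
    rw [coeff_tot, Finset.sum_range_succ, hg (e j + 1) e (by omega), add_zero]
  rw [map_add, h1, coeff_tot, Finset.sum_range_succ', add_comm]

end AuxGF
namespace AuxGF
open MvPowerSeries Finset

lemma constantCoeff_delta (k : ℕ) : constantCoeff (deltaS k) = 1 := by
  cases k with
  | zero => simp [deltaS]
  | succ k => simp [deltaS, T, U, constantCoeff_X]

lemma constantCoeff_gamma (k : ℕ) : constantCoeff (gammaS k) = 1 := by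
  cases k with
  | zero => simp [gammaS]
  | succ k => simp [gammaS, T, U, Z, constantCoeff_X]

lemma delta_ne (k : ℕ) : constantCoeff (deltaS k) ≠ 0 := by
  rw [constantCoeff_delta]; exact one_ne_zero

lemma gamma_ne (k : ℕ) : constantCoeff (gammaS k) ≠ 0 := by
  rw [constantCoeff_gamma]; exact one_ne_zero

lemma delta_mul_inv (k : ℕ) : deltaS k * (deltaS k)⁻¹ = 1 :=
  MvPowerSeries.mul_inv_cancel _ (delta_ne k)

lemma gamma_mul_inv (k : ℕ) : gammaS k * (gammaS k)⁻¹ = 1 :=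
  MvPowerSeries.mul_inv_cancel _ (gamma_ne k)

lemma delta_succ_sub (s : ℕ) : deltaS (s+1) - deltaS s = T * (1 - T)^s * (U - 1) := by
  cases s with
  | zero => simp only [deltaS]; ring
  | succ s => simp only [deltaS]; ring

lemma gamma_eq (s : ℕ) : gammaS (s+1) = T * Z * (1 - T)^s * (U - 1) + deltaS s := by
  cases s with
  | zero => simp only [gammaS, deltaS]; ring
  | succ s => simp only [gammaS, deltaS]; ring

/-- `W_s = δ_s⁻¹`. -/
noncomputable def Ws (s : ℕ) : PS := (deltaS s)⁻¹

/-- `V_s = δ_s δ_{s+1}⁻¹`, the kernel root. -/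
noncomputable def Vs (s : ℕ) : PS := deltaS s * (deltaS (s+1))⁻¹

lemma one_sub_Vs (s : ℕ) : 1 - Vs s = T * (1 - T)^s * (U - 1) * (deltaS (s+1))⁻¹ := by
  have h := delta_mul_inv (s+1)
  calc 1 - Vs s = (deltaS (s+1) - deltaS s) * (deltaS (s+1))⁻¹ := by
        rw [Vs, sub_mul, h]
    _ = T * (1 - T)^s * (U - 1) * (deltaS (s+1))⁻¹ := by rw [delta_succ_sub]

lemma kernel_eq (s : ℕ) : T * ((U * Ws s - 1) * Vs s) = 1 - Vs s := by
  rw [one_sub_Vs, Ws, Vs]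
  have h1 : U * (deltaS s)⁻¹ - 1 = (U - deltaS s) * (deltaS s)⁻¹ := by
    rw [sub_mul, delta_mul_inv]
  rw [h1]
  have h2 : U - deltaS s = (1 - T)^s * (U - 1) := by
    cases s with
    | zero => simp only [deltaS]; ring
    | succ s => simp only [deltaS]; ring
  rw [h2]
  have h3 : (deltaS s)⁻¹ * deltaS s = 1 := by rw [mul_comm, delta_mul_inv]
  calc T * ((1 - T)^s * (U - 1) * (deltaS s)⁻¹ * (deltaS s * (deltaS (s+1))⁻¹))
      = T * (1 - T)^s * (U - 1) * (deltaS (s+1))⁻¹ * ((deltaS s)⁻¹ * deltaS s) := by ring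
    _ = T * (1 - T)^s * (U - 1) * (deltaS (s+1))⁻¹ := by rw [h3, mul_one]

lemma zcoef_eq (s : ℕ) : (1 - Vs s) * Z + Vs s = gammaS (s+1) * (deltaS (s+1))⁻¹ := by
  rw [one_sub_Vs, Vs, gamma_eq]
  ring

lemma Vs_mul_Ws (s : ℕ) : Vs s * Ws s = Ws (s+1) := by
  rw [Vs, Ws, Ws]
  have h3 : (deltaS s)⁻¹ * deltaS s = 1 := by rw [mul_comm, delta_mul_inv]
  calc deltaS s * (deltaS (s+1))⁻¹ * (deltaS s)⁻¹
      = (deltaS s)⁻¹ * deltaS s * (deltaS (s+1))⁻¹ := by ring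
    _ = (deltaS (s+1))⁻¹ := by rw [h3, one_mul]

end AuxGF
namespace AuxGF
open List Finset MvPowerSeries

lemma ascents_cons_cons (x y : ℕ) (l : List ℕ) :
    ascents (x :: y :: l) = ascents (y :: l) + (if x < y then 1 else 0) := by
  show ((x :: y :: l).zip (y :: l)).countP _ = _
  rw [List.zip_cons_cons, List.countP_cons]
  simp [ascents]

lemma ascents_le (l : List ℕ) : ascents l ≤ l.length - 1 := by
  have h1 : ascents l ≤ (l.zip l.tail).length := List.countP_le_length
  have h2 : (l.zip l.tail).length = min l.length l.tail.length := List.length_zip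
  have h3 : l.tail.length = l.length - 1 := List.length_tail
  omega

lemma ascents_concat (x : ℕ) : ∀ (l : List ℕ) (h : l ≠ []),
    ascents (l ++ [x]) = ascents l + (if l.getLast h < x then 1 else 0)
  | [], h => absurd rfl h
  | [a], _ => by
    show ascents [a, x] = ascents [a] + _
    rw [ascents_cons_cons]
    simp [ascents, List.getLast]
    by_cases hax : a < x <;> simp [hax]
  | a :: b :: t, _ => by
    have ih := ascents_concat x (b :: t) (by simp)
    rw [List.cons_append] at ih
    show ascents (a :: b :: (t ++ [x])) = _
    rw [ascents_cons_cons, ih, ascents_cons_cons]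
    rw [List.getLast_cons (by simp : (b :: t) ≠ [])]
    omega

/-- The tail validity predicate. -/
def ValidT (m : List ℕ) : Prop := IsAscentSeq (0 :: 1 :: m)

/-- `a(m)`, the number of ascents of the full sequence. -/
def ascE (m : List ℕ) : ℕ := ascents (0 :: 1 :: m)

/-- `ℓ(m)`, the last entry of the full sequence. -/
def lastE (m : List ℕ) : ℕ := (1 :: m).getLast (List.cons_ne_nil 1 m)

/-- number of zeros of the tail. -/
def zerE (m : List ℕ) : ℕ := m.count 0

lemma ascE_nil : ascE [] = 1 := rfl
lemma lastE_nil : lastE [] = 1 := rfl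
lemma zerE_nil : zerE [] = 0 := rfl

lemma cons_cons_concat (m : List ℕ) (j : ℕ) :
    (0 : ℕ) :: 1 :: (m ++ [j]) = (0 :: 1 :: m) ++ [j] := by simp

lemma isAscentSeq_concat (w : List ℕ) (hw : w ≠ []) (j : ℕ) :
    IsAscentSeq (w ++ [j]) ↔ IsAscentSeq w ∧ j ≤ ascents w + 1 := by
  have hlen : w.length ≠ 0 := by simpa [List.length_eq_zero_iff] using hw
  constructor
  · intro h
    constructor
    · intro i hi
      have hi' : i < (w ++ [j]).length := by simp; omega
      have h2 := h i hi'
      rw [List.get_eq_getElem, List.getElem_append_left hi,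
        List.take_append_of_le_length (le_of_lt hi)] at h2
      rw [List.get_eq_getElem]
      exact h2
    · have hi' : w.length < (w ++ [j]).length := by simp
      have h2 := h w.length hi'
      rw [List.get_eq_getElem, List.getElem_append_right (le_refl w.length),
        List.take_append_of_le_length (le_refl w.length), List.take_length,
        if_neg hlen] at h2
      simpa using h2
  · rintro ⟨h1, h2⟩ i hi
    have hi2 : i < w.length + 1 := by simpa using hi
    rcases lt_or_eq_of_le (Nat.lt_succ_iff.mp hi2) with hlt | heq
    · have h2 := h1 i hlt
      rw [List.get_eq_getElem] at h2
      rw [List.get_eq_getElem, List.getElem_append_left hlt,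
        List.take_append_of_le_length (le_of_lt hlt)]
      exact h2
    · subst heq
      rw [List.get_eq_getElem, List.getElem_append_right (le_refl w.length),
        List.take_append_of_le_length (le_refl w.length), List.take_length, if_neg hlen]
      simpa using h2

lemma validT_concat (m : List ℕ) (j : ℕ) :
    ValidT (m ++ [j]) ↔ ValidT m ∧ j ≤ ascE m + 1 := by
  rw [ValidT, cons_cons_concat, isAscentSeq_concat _ (by simp)]
  rfl

lemma ascE_concat (m : List ℕ) (j : ℕ) :
    ascE (m ++ [j]) = ascE m + (if lastE m < j then 1 else 0) := by
  rw [ascE, cons_cons_concat, ascents_concat j _ (by simp)]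
  rw [List.getLast_cons (by simp : (1 :: m : List ℕ) ≠ [])]
  rfl

lemma lastE_concat (m : List ℕ) (j : ℕ) : lastE (m ++ [j]) = j := by
  rw [lastE]
  have : (1 :: (m ++ [j]) : List ℕ) = (1 :: m) ++ [j] := by simp
  simp only [this]
  exact List.getLast_concat

lemma zerE_concat (m : List ℕ) (j : ℕ) :
    zerE (m ++ [j]) = zerE m + (if j = 0 then 1 else 0) := by
  rw [zerE, zerE, List.count_append]
  congr 1
  by_cases h : j = 0 <;> simp [h, List.count_singleton]

lemma validT_nil : ValidT [] := by
  intro i hi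
  simp only [List.length_cons, List.length_nil] at hi
  interval_cases i
  · simp
  · simp [ascents]

lemma lastE_le {m : List ℕ} (h : ValidT m) : lastE m ≤ ascE m + 1 := by
  induction m using List.reverseRecOn with
  | nil => simp [lastE_nil, ascE_nil]
  | append_singleton m j _ =>
    obtain ⟨-, hj⟩ := (validT_concat m j).mp h
    rw [lastE_concat, ascE_concat]
    split <;> omega

lemma entry_le {m : List ℕ} (h : ValidT m) {i : ℕ} (hi : i < m.length) : m[i] ≤ i + 2 := by
  have hi' : i + 2 < (0 :: 1 :: m : List ℕ).length := by simp; omega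
  have := h (i + 2) hi'
  rw [if_neg (by omega)] at this
  have hget : (0 :: 1 :: m : List ℕ).get ⟨i + 2, hi'⟩ = m[i] := by
    simp [List.get_eq_getElem]
  rw [hget] at this
  have htake : (0 :: 1 :: m : List ℕ).take (i + 2) = 0 :: 1 :: m.take i := by
    simp [List.take_succ_cons]
  rw [htake] at this
  have hb : ascents (0 :: 1 :: m.take i) ≤ i + 1 := by
    have := ascents_le (0 :: 1 :: m.take i)
    have hlt : (m.take i).length ≤ i := by simp
    simp only [List.length_cons] at this
    omega
  omega

/-- Finset of lists of given length with entries bounded. -/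
def listsB : ℕ → ℕ → Finset (List ℕ)
  | 0, _ => {[]}
  | n + 1, B => (Finset.range B).biUnion (fun j => (listsB n B).image (fun m => j :: m))

lemma mem_listsB {n B : ℕ} {m : List ℕ} :
    m ∈ listsB n B ↔ m.length = n ∧ ∀ x ∈ m, x < B := by
  induction n generalizing m with
  | zero =>
    cases m <;> simp [listsB]
  | succ n ih =>
    cases m with
    | nil => simp [listsB]
    | cons a t =>
      simp only [listsB, Finset.mem_biUnion, Finset.mem_image, Finset.mem_range]
      constructor
      · rintro ⟨j, hj, m', hm', heq⟩
        obtain ⟨h1, h2⟩ := ih.mp hm'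
        cases heq
        refine ⟨by simp [h1], ?_⟩
        intro x hx
        rcases List.mem_cons.mp hx with rfl | hx
        · exact hj
        · exact h2 x hx
      · rintro ⟨h1, h2⟩
        refine ⟨a, h2 a (by simp), t, ih.mpr ⟨by simpa using h1, fun x hx => h2 x (by simp [hx])⟩, rfl⟩

noncomputable instance : DecidablePred ValidT := Classical.decPred _

/-- The finite set of valid tails of length `n`. -/
noncomputable def validFinset (n : ℕ) : Finset (List ℕ) :=
  (listsB n (n + 2)).filter (fun m => ValidT m)

lemma mem_validFinset {n : ℕ} {m : List ℕ} :
    m ∈ validFinset n ↔ m.length = n ∧ ValidT m := by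
  rw [validFinset, Finset.mem_filter, mem_listsB]
  constructor
  · rintro ⟨⟨h1, -⟩, h2⟩; exact ⟨h1, h2⟩
  · rintro ⟨h1, h2⟩
    refine ⟨⟨h1, ?_⟩, h2⟩
    intro x hx
    obtain ⟨i, hi, rfl⟩ := List.mem_iff_getElem.mp hx
    have := entry_le h2 hi
    omega

lemma validFinset_zero : validFinset 0 = {[]} := by
  ext m
  rw [mem_validFinset, Finset.mem_singleton]
  constructor
  · rintro ⟨h1, -⟩; exact List.length_eq_zero_iff.mp h1
  · rintro rfl; exact ⟨rfl, validT_nil⟩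

lemma dropLast_concat_getLastD {m : List ℕ} (h : m ≠ []) :
    m.dropLast ++ [m.getLastD 0] = m := by
  induction m using List.reverseRecOn with
  | nil => exact absurd rfl h
  | append_singleton m j _ => rw [List.dropLast_concat, List.getLastD_concat]

lemma sum_validFinset_succ {M : Type*} [AddCommMonoid M] (n : ℕ) (f : List ℕ → M) :
    ∑ m ∈ validFinset (n + 1), f m
      = ∑ m ∈ validFinset n, ∑ j ∈ Finset.range (ascE m + 2), f (m ++ [j]) := by
  rw [Finset.sum_sigma']
  apply Finset.sum_nbij' (i := fun m => (⟨m.dropLast, m.getLastD 0⟩ :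
      Σ _ : List ℕ, ℕ)) (j := fun p => p.1 ++ [p.2])
  · intro m hm
    obtain ⟨h1, h2⟩ := mem_validFinset.mp hm
    have hne : m ≠ [] := by intro h; simp [h] at h1
    have hd : m.dropLast ++ [m.getLastD 0] = m := dropLast_concat_getLastD hne
    obtain ⟨hv, hj⟩ := (validT_concat _ _).mp (hd ▸ h2)
    rw [Finset.mem_sigma, mem_validFinset, Finset.mem_range]
    dsimp only
    refine ⟨⟨?_, hv⟩, by omega⟩
    rw [List.length_dropLast, h1]; omega
  · rintro ⟨m, j⟩ hp
    rw [Finset.mem_sigma, mem_validFinset, Finset.mem_range] at hp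
    dsimp only at hp
    obtain ⟨⟨h1, h2⟩, hj⟩ := hp
    rw [mem_validFinset]
    constructor
    · simp [h1]
    · exact (validT_concat m j).mpr ⟨h2, by omega⟩
  · intro m hm
    obtain ⟨h1, -⟩ := mem_validFinset.mp hm
    exact dropLast_concat_getLastD (by intro h; simp [h] at h1)
  · rintro ⟨m, j⟩ _
    simp [List.dropLast_concat, List.getLastD_concat]
  · intro m hm
    obtain ⟨h1, -⟩ := mem_validFinset.mp hm
    rw [dropLast_concat_getLastD (by intro h; simp [h] at h1)]

end AuxGF
namespace AuxGF
open MvPowerSeries Finset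

lemma T_def : T = X 0 := rfl

/-- weight of a tail. -/
noncomputable def wt (Vv Ww : PS) (m : List ℕ) : PS :=
  T ^ m.length * (U ^ ascE m * Vv ^ lastE m * Ww ^ ascE m * Z ^ zerE m)

/-- the generating function of valid tails of length `n`. -/
noncomputable def Fslice (Vv Ww : PS) (n : ℕ) : PS := ∑ m ∈ validFinset n, wt Vv Ww m

lemma sliceOK_Fslice (Vv Ww : PS) : SliceOK 0 (Fslice Vv Ww) := by
  intro n e he
  rw [Fslice, map_sum]
  apply Finset.sum_eq_zero
  intro m hm
  rw [wt, (mem_validFinset.mp hm).1, T_def]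
  exact coeff_Xpow_mul_eq_zero he _

lemma Fslice_zero (Vv Ww : PS) : Fslice Vv Ww 0 = U * Vv * Ww := by
  rw [Fslice, validFinset_zero, Finset.sum_singleton, wt]
  simp only [List.length_nil, ascE_nil, lastE_nil, zerE_nil, pow_zero, pow_one]
  ring

lemma geom_ico (x : PS) {c d : ℕ} (h : c ≤ d) :
    (1 - x) * ∑ j ∈ Finset.Ico c d, x ^ j = x ^ c - x ^ d := by
  rw [Finset.sum_Ico_eq_sum_range]
  have hp : ∀ j ∈ Finset.range (d - c), x ^ (c + j) = x ^ c * x ^ j :=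
    fun j _ => pow_add x c j
  rw [Finset.sum_congr rfl hp, ← Finset.mul_sum]
  have g := geom_sum_mul x (d - c)
  have hd : x ^ c * x ^ (d - c) = x ^ d := by rw [← pow_add, Nat.add_sub_cancel' h]
  linear_combination (-(x ^ c)) * g - hd

lemma wt_concat (Vv Ww : PS) (m : List ℕ) (j : ℕ) :
    wt Vv Ww (m ++ [j]) = T * (T ^ m.length *
      (U ^ (ascE m + (if lastE m < j then 1 else 0)) * Vv ^ j *
       Ww ^ (ascE m + (if lastE m < j then 1 else 0)) * Z ^ (zerE m + (if j = 0 then 1 else 0)))) := by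
  rw [wt, ascE_concat, lastE_concat, zerE_concat, List.length_append]
  simp only [List.length_singleton]
  ring

lemma inner_sum (Vv Ww : PS) (m : List ℕ) (hm : ValidT m) :
    (1 - Vv) * ∑ j ∈ Finset.range (ascE m + 2), wt Vv Ww (m ++ [j])
    = T * (((1 - Vv) * Z + Vv) * wt 1 Ww m + (U * Ww - 1) * Vv * wt Vv Ww m
        - U * Ww * Vv ^ 2 * wt 1 (Vv * Ww) m) := by
  have hla : lastE m ≤ ascE m + 1 := lastE_le hm
  rw [Finset.range_eq_Ico, Finset.sum_eq_sum_Ico_succ_bot (by omega),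
      ← Finset.sum_Ico_consecutive _ (show 1 ≤ lastE m + 1 by omega)
        (show lastE m + 1 ≤ ascE m + 2 by omega)]
  have h0 : wt Vv Ww (m ++ [0]) = T * (T ^ m.length *
      (U ^ ascE m * Ww ^ ascE m * (Z * Z ^ zerE m))) := by
    rw [wt_concat]
    rw [if_neg (by omega), if_pos rfl]
    ring
  have h1 : ∀ j ∈ Finset.Ico 1 (lastE m + 1), wt Vv Ww (m ++ [j]) =
      (T * (T ^ m.length * (U ^ ascE m * Ww ^ ascE m * Z ^ zerE m))) * Vv ^ j := by
    intro j hj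
    rw [Finset.mem_Ico] at hj
    rw [wt_concat, if_neg (by omega), if_neg (by omega)]
    ring
  have h2 : ∀ j ∈ Finset.Ico (lastE m + 1) (ascE m + 2), wt Vv Ww (m ++ [j]) =
      (T * (T ^ m.length * (U ^ (ascE m + 1) * Ww ^ (ascE m + 1) * Z ^ zerE m))) * Vv ^ j := by
    intro j hj
    rw [Finset.mem_Ico] at hj
    rw [wt_concat, if_pos (by omega), if_neg (by omega)]
    ring
  rw [h0, Finset.sum_congr rfl h1, Finset.sum_congr rfl h2, ← Finset.mul_sum, ← Finset.mul_sum]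
  have g1 := geom_ico Vv (show 1 ≤ lastE m + 1 by omega)
  have g2 := geom_ico Vv (show lastE m + 1 ≤ ascE m + 2 by omega)
  rw [wt, wt, wt]
  linear_combination (T * (T ^ m.length * (U ^ ascE m * Ww ^ ascE m * Z ^ zerE m))) * g1 +
    (T * (T ^ m.length * (U ^ (ascE m + 1) * Ww ^ (ascE m + 1) * Z ^ zerE m))) * g2

lemma slice_eq (Vv Ww : PS) (n : ℕ) :
    (1 - Vv) * Fslice Vv Ww (n + 1)
      = T * (((1 - Vv) * Z + Vv) * Fslice 1 Ww n + (U * Ww - 1) * Vv * Fslice Vv Ww n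
          - U * Ww * Vv ^ 2 * Fslice 1 (Vv * Ww) n) := by
  rw [Fslice, sum_validFinset_succ, Finset.mul_sum]
  have key : ∀ m ∈ validFinset n,
      (1 - Vv) * ∑ j ∈ Finset.range (ascE m + 2), wt Vv Ww (m ++ [j])
      = T * (((1 - Vv) * Z + Vv) * wt 1 Ww m + (U * Ww - 1) * Vv * wt Vv Ww m
          - U * Ww * Vv ^ 2 * wt 1 (Vv * Ww) m) := by
    intro m hm
    exact inner_sum Vv Ww m (mem_validFinset.mp hm).2
  rw [Finset.sum_congr rfl key]
  simp only [Fslice, Finset.mul_sum, ← Finset.sum_add_distrib, ← Finset.sum_sub_distrib]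

end AuxGF
namespace AuxGF
open List Finset MvPowerSeries

lemma ascents_replicate_append : ∀ r : ℕ, 1 ≤ r → ∀ w : List ℕ,
    ascents (List.replicate r 0 ++ w) = ascents (0 :: w)
  | 0, h, _ => absurd h (by omega)
  | 1, _, w => by simp
  | (r+2), _, w => by
    have ih := ascents_replicate_append (r+1) (by omega) w
    have h2 : List.replicate (r+1) 0 ++ w = 0 :: (List.replicate r 0 ++ w) := by
      simp [List.replicate_succ]
    have h3 : List.replicate (r+2) 0 ++ w
        = 0 :: (0 :: (List.replicate r 0 ++ w)) := by
      simp [List.replicate_succ]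
    rw [h3, ascents_cons_cons, if_neg (lt_irrefl 0), ← h2, ih, add_zero]

lemma ascents_replicate (r : ℕ) : ascents (List.replicate r 0) = 0 := by
  cases r with
  | zero => rfl
  | succ r =>
    have := ascents_replicate_append (r+1) (by omega) []
    simpa [ascents] using this

lemma full_length (r : ℕ) (m : List ℕ) :
    (List.replicate r 0 ++ 1 :: m).length = r + 1 + m.length := by simp; omega

lemma full_ascents (r : ℕ) (hr : 1 ≤ r) (m : List ℕ) :
    ascents (List.replicate r 0 ++ 1 :: m) = ascE m :=
  ascents_replicate_append r hr (1 :: m)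

lemma full_count (r : ℕ) (m : List ℕ) :
    (List.replicate r 0 ++ 1 :: m).count 0 = r + zerE m := by
  rw [List.count_append, List.count_replicate, List.count_cons]
  simp [zerE]

lemma full_runZeros (r : ℕ) (hr : 1 ≤ r) (m : List ℕ) :
    runZeros (List.replicate r 0 ++ 1 :: m) = r := by
  rw [runZeros, if_neg, List.takeWhile_append]
  · rw [List.takeWhile_replicate]
    simp only [beq_self_eq_true, if_true, List.length_replicate, if_pos rfl]
    rw [List.takeWhile_cons_of_neg (by simp)]
    simp
  · simp only [List.all_append, Bool.and_eq_true, List.all_eq_true, not_and]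
    intro _ h
    have := h 1 (by simp)
    simp at this

lemma full_take (r : ℕ) (m : List ℕ) (k : ℕ) :
    (List.replicate r 0 ++ 1 :: m).take (r + 1 + k)
      = List.replicate r 0 ++ 1 :: m.take k := by
  rw [List.take_append, List.take_replicate, List.length_replicate]
  have h1 : (r + 1 + k) ⊓ r = r := by omega
  have h2 : r + 1 + k - r = k + 1 := by omega
  rw [h1, h2, List.take_succ_cons]

lemma full_getElem_lt (r : ℕ) (m : List ℕ) (i : ℕ) (hi : i < r)
    (h : i < (List.replicate r 0 ++ 1 :: m).length) :
    (List.replicate r 0 ++ 1 :: m)[i] = 0 := by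
  rw [List.getElem_append_left (by simpa using hi)]
  exact List.getElem_replicate _

lemma full_getElem_r (r : ℕ) (m : List ℕ)
    (h : r < (List.replicate r 0 ++ 1 :: m).length) :
    (List.replicate r 0 ++ 1 :: m)[r] = 1 := by
  rw [List.getElem_append_right (by simp)]
  simp

lemma full_getElem_gt (r : ℕ) (m : List ℕ) (k : ℕ) (hk : k < m.length)
    (h : r + 1 + k < (List.replicate r 0 ++ 1 :: m).length) :
    (List.replicate r 0 ++ 1 :: m)[r + 1 + k] = m[k] := by
  rw [List.getElem_append_right (by simp; omega)]
  have h2 : r + 1 + k - (List.replicate r (0:ℕ)).length = k + 1 := by simp; omega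
  simp only [h2]
  simp

lemma isAscentSeq_full_iff (r : ℕ) (hr : 1 ≤ r) (m : List ℕ) :
    IsAscentSeq (List.replicate r 0 ++ 1 :: m) ↔ ValidT m := by
  have hlen : (List.replicate r 0 ++ 1 :: m).length = r + 1 + m.length :=
    full_length r m
  constructor
  · intro h i hi
    simp only [List.length_cons] at hi
    rcases i with _ | (_ | k)
    · simp
    · rw [if_neg (by omega)]
      have hasc : ascents (((0:ℕ) :: 1 :: m).take 1) = 0 := rfl
      simp [List.get_eq_getElem, hasc]
    · rw [if_neg (by omega)]
      have hk : k < m.length := by omega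
      have h2 := h (r + 1 + k) (by omega)
      rw [List.get_eq_getElem, full_getElem_gt r m k hk, if_neg (by omega),
        full_take, ascents_replicate_append r hr] at h2
      have hget : (0 :: 1 :: m : List ℕ).get ⟨k+2, by simp; omega⟩ = m[k] := by
        simp [List.get_eq_getElem]
      have htak : (0 :: 1 :: m : List ℕ).take (k + 2) = 0 :: 1 :: m.take k := by
        simp [List.take_succ_cons]
      rw [hget, htak]
      exact h2
  · intro h i hi
    rw [hlen] at hi
    rcases lt_trichotomy i r with hir | hir | hir
    · rw [List.get_eq_getElem, full_getElem_lt r m i hir]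
      exact Nat.zero_le _
    · subst hir
      rw [List.get_eq_getElem, full_getElem_r i m, if_neg (by omega)]
      have htk : (List.replicate i 0 ++ 1 :: m).take i = List.replicate i 0 := by
        rw [List.take_append_of_le_length (by simp), List.take_replicate]
        congr 1; omega
      rw [htk, ascents_replicate]
    · obtain ⟨k, rfl⟩ : ∃ k, i = r + 1 + k := ⟨i - (r+1), by omega⟩
      have hk : k < m.length := by omega
      have h2 := h (k + 2) (by simp; omega)
      rw [if_neg (by omega)] at h2
      have hget : (0 :: 1 :: m : List ℕ).get ⟨k+2, by simp; omega⟩ = m[k] := by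
        simp [List.get_eq_getElem]
      have htak : (0 :: 1 :: m : List ℕ).take (k + 2) = 0 :: 1 :: m.take k := by
        simp [List.take_succ_cons]
      rw [hget, htak] at h2
      rw [List.get_eq_getElem, if_neg (by omega), full_getElem_gt r m k hk, full_take,
        ascents_replicate_append r hr]
      exact h2

lemma length_le_takeWhile (p : ℕ → Bool) :
    ∀ (l : List ℕ) (n : ℕ), (∀ x ∈ l.take n, p x) → n ≤ l.length →
      n ≤ (l.takeWhile p).length
  | _, 0, _, _ => Nat.zero_le _
  | [], n+1, _, h => by simp at h
  | (a :: t), n+1, hall, h => by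
    have hpa : p a := hall a (by simp)
    rw [List.takeWhile_cons_of_pos hpa]
    simp only [List.length_cons]
    have := length_le_takeWhile p t n (fun x hx => hall x (by simp [hx])) (by simpa using h)
    omega

lemma decomp (r : ℕ) (hr : 1 ≤ r) (l : List ℕ) (h1 : IsAscentSeq l)
    (h2 : runZeros l = r) : l = List.replicate r 0 ++ 1 :: l.drop (r + 1) := by
  rw [runZeros] at h2
  have hall : ¬(l.all (· == 0) = true) := by
    intro hc; rw [if_pos hc] at h2; omega
  rw [if_neg hall] at h2
  have hpre : l.takeWhile (· == 0) = l.take r := by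
    have := List.prefix_iff_eq_take.mp (List.takeWhile_prefix (· == 0) (l := l))
    rwa [h2] at this
  have hrle : r ≤ l.length := by
    have h3 := (List.takeWhile_prefix (p := (· == 0)) (l := l)).length_le
    omega
  have htake : l.take r = List.replicate r 0 := by
    rw [List.eq_replicate_iff]
    constructor
    · rw [List.length_take]; omega
    · intro b hb
      rw [← hpre] at hb
      have := List.mem_takeWhile_imp hb
      simpa using this
  have hrlt : r < l.length := by
    rcases eq_or_lt_of_le hrle with heq | hlt
    · exfalso
      apply hall
      rw [List.all_eq_true]
      intro x hx
      have hl : l = List.replicate r 0 := by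
        rw [← htake, List.take_of_length_le (le_of_eq heq.symm)]
      rw [hl] at hx
      have := List.eq_of_mem_replicate hx
      simp [this]
    · exact hlt
  have hne : l[r] ≠ 0 := by
    intro hc
    have hall2 : ∀ x ∈ l.take (r+1), ((· == 0) x) = true := by
      intro x hx
      obtain ⟨i, hi, rfl⟩ := List.mem_iff_getElem.mp hx
      have hi' : i < r + 1 := by
        rw [List.length_take] at hi; omega
      rw [List.getElem_take]
      rcases Nat.lt_or_ge i r with h5 | h5
      · have h6 : l[i] = (l.take r)[i]'(by rw [List.length_take]; omega) :=
          List.getElem_take.symm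
        simp [h6, htake]
      · have h7 : i = r := by omega
        subst h7
        simp [hc]
    have := length_le_takeWhile (· == 0) l (r+1) hall2 (by omega)
    omega
  have h3 : l[r]'hrlt ≤ if r = 0 then 0 else ascents (l.take r) + 1 := h1 r hrlt
  rw [if_neg (by omega), htake, ascents_replicate] at h3
  have hlr : l[r] = 1 := by omega
  conv_lhs => rw [← List.take_append_drop r l]
  rw [htake, List.drop_eq_getElem_cons hrlt, hlr]

end AuxGF
namespace AuxGF
open List Finset MvPowerSeries

lemma U_def : U = X 1 := rfl
lemma Z_def : Z = X 3 := rfl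

lemma mono3 (a b c : ℕ) : (X 0 : PS) ^ a * X 1 ^ b * X 3 ^ c
    = monomial (Finsupp.single 0 a + Finsupp.single 1 b + Finsupp.single 3 c) 1 := by
  rw [X_pow_eq, X_pow_eq, X_pow_eq, monomial_mul_monomial, monomial_mul_monomial,
    one_mul, one_mul]

lemma finsupp_eq_iff (e : Fin 4 →₀ ℕ) (a b c : ℕ) :
    e = Finsupp.single 0 a + Finsupp.single 1 b + Finsupp.single 3 c ↔
      e 0 = a ∧ e 1 = b ∧ e 2 = 0 ∧ e 3 = c := by
  constructor
  · rintro rfl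
    refine ⟨?_, ?_, ?_, ?_⟩ <;>
      simp [Finsupp.add_apply, Finsupp.single_apply]
  · rintro ⟨h0, h1, h2, h3⟩
    ext j
    fin_cases j <;>
      simp_all [Finsupp.add_apply, Finsupp.single_apply]

/-- The finite set counted by the coefficient of `e` in `G_r(t,u,1,z)`. -/
noncomputable def Qset (r : ℕ) (e : Fin 4 →₀ ℕ) : Finset (List ℕ) :=
  (validFinset (e 0 - (r + 1))).filter (fun m => ascE m = e 1 ∧ r + zerE m = e 3)

lemma coeff_prod_side (r : ℕ) (e : Fin 4 →₀ ℕ) :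
    MvPowerSeries.coeff e (T ^ (r+1) * Z ^ r * Tot 0 (Fslice 1 1)) =
      if e 2 = 0 ∧ r + 1 ≤ e 0 ∧ r ≤ e 3 then ((Qset r e).card : ℚ) else 0 := by
  classical
  have hOK := sliceOK_Fslice (1 : PS) 1
  rw [show T ^ (r+1) * Z ^ r * Tot 0 (Fslice 1 1)
      = (T ^ (r+1) * Z ^ r) * Tot 0 (Fslice 1 1) from by ring, ← tot_mulC hOK, coeff_tot]
  have hco : ∀ n, MvPowerSeries.coeff e ((T ^ (r+1) * Z ^ r) * Fslice 1 1 n)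
      = (((validFinset n).filter (fun m => e 0 = r + 1 + m.length ∧ e 1 = ascE m ∧
          e 2 = 0 ∧ e 3 = r + zerE m)).card : ℚ) := by
    intro n
    have hterm : (T ^ (r+1) * Z ^ r) * Fslice 1 1 n
        = ∑ m ∈ validFinset n, monomial (Finsupp.single 0 (r + 1 + m.length) +
            Finsupp.single 1 (ascE m) + Finsupp.single 3 (r + zerE m)) 1 := by
      rw [Fslice, Finset.mul_sum]
      apply Finset.sum_congr rfl
      intro m _
      rw [wt, ← mono3]
      simp only [T_def, U_def, Z_def, one_pow, pow_add]
      ring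
    rw [hterm, map_sum]
    have hmn : ∀ m ∈ validFinset n,
        MvPowerSeries.coeff e (monomial (Finsupp.single 0 (r + 1 + m.length) +
            Finsupp.single 1 (ascE m) + Finsupp.single 3 (r + zerE m)) 1)
        = if (e 0 = r + 1 + m.length ∧ e 1 = ascE m ∧ e 2 = 0 ∧ e 3 = r + zerE m)
            then (1:ℚ) else 0 := by
      intro m _
      rw [coeff_monomial]
      exact if_congr (finsupp_eq_iff e _ _ _) rfl rfl
    rw [Finset.sum_congr rfl hmn, Finset.sum_boole]
  rw [Finset.sum_congr rfl (fun n _ => hco n)]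
  by_cases hgood : e 2 = 0 ∧ r + 1 ≤ e 0 ∧ r ≤ e 3
  · rw [if_pos hgood]
    obtain ⟨h2, h0, h3⟩ := hgood
    have hn0 : e 0 - (r + 1) ∈ Finset.range (e 0 + 1) := by
      rw [Finset.mem_range]; omega
    rw [Finset.sum_eq_single_of_mem _ hn0]
    · have hfe : Finset.filter (fun m => e 0 = r + 1 + m.length ∧ e 1 = ascE m ∧
          e 2 = 0 ∧ e 3 = r + zerE m) (validFinset (e 0 - (r+1))) = Qset r e := by
        rw [Qset]
        apply Finset.filter_congr
        intro m hm
        have hlen := (mem_validFinset.mp hm).1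
        constructor
        · rintro ⟨-, hb, -, hd⟩
          exact ⟨hb.symm, hd.symm⟩
        · rintro ⟨hb, hd⟩
          exact ⟨by omega, hb.symm, h2, hd.symm⟩
      rw [hfe]
    · intro n _ hn
      rw [Nat.cast_eq_zero, Finset.card_eq_zero, Finset.filter_eq_empty_iff]
      intro m hm
      have hlen := (mem_validFinset.mp hm).1
      rintro ⟨ha, -, -, -⟩
      omega
  · rw [if_neg hgood]
    apply Finset.sum_eq_zero
    intro n _
    rw [Nat.cast_eq_zero, Finset.card_eq_zero, Finset.filter_eq_empty_iff]
    intro m hm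
    rintro ⟨ha, -, hc, hd⟩
    exact hgood ⟨hc, by omega, by omega⟩

lemma coeff_GrOne (r : ℕ) (hr : 1 ≤ r) (e : Fin 4 →₀ ℕ) :
    MvPowerSeries.coeff e (GrOne r) =
      if e 2 = 0 ∧ r + 1 ≤ e 0 ∧ r ≤ e 3 then ((Qset r e).card : ℚ) else 0 := by
  rw [coeff_apply]
  show (if e 2 = 0 then
      (Nat.card {l : List ℕ // IsAscentSeq l ∧ runZeros l = r ∧ l.length = e 0 ∧
        ascents l = e 1 ∧ l.count 0 = e 3} : ℚ) else 0) = _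
  by_cases h2 : e 2 = 0
  · rw [if_pos h2]
    by_cases hgood : r + 1 ≤ e 0 ∧ r ≤ e 3
    · rw [if_pos ⟨h2, hgood.1, hgood.2⟩]
      congr 1
      have hEq : {l : List ℕ // IsAscentSeq l ∧ runZeros l = r ∧ l.length = e 0 ∧
          ascents l = e 1 ∧ l.count 0 = e 3} ≃ {m : List ℕ // m ∈ Qset r e} := by
        refine ⟨fun ⟨l, hl⟩ => ⟨l.drop (r+1), ?_⟩, fun ⟨m, hm⟩ =>
          ⟨List.replicate r 0 ++ 1 :: m, ?_⟩, ?_, ?_⟩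
        · obtain ⟨ha, hz, hlen, hasc, hcnt⟩ := hl
          have hd := decomp r hr l ha hz
          rw [Qset, Finset.mem_filter, mem_validFinset]
          refine ⟨⟨by rw [List.length_drop]; omega, ?_⟩, ?_, ?_⟩
          · exact (isAscentSeq_full_iff r hr _).mp (hd ▸ ha)
          · have h5 := full_ascents r hr (l.drop (r+1))
            rw [← hd] at h5
            omega
          · have h6 := full_count r (l.drop (r+1))
            rw [← hd] at h6
            omega
        · rw [Qset, Finset.mem_filter, mem_validFinset] at hm
          obtain ⟨⟨hlen, hv⟩, hasc, hcnt⟩ := hm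
          refine ⟨(isAscentSeq_full_iff r hr m).mpr hv, full_runZeros r hr m, ?_, ?_, ?_⟩
          · rw [full_length]; omega
          · rw [full_ascents r hr]; exact hasc
          · rw [full_count]; exact hcnt
        · rintro ⟨l, hl⟩
          apply Subtype.ext
          exact (decomp r hr l hl.1 hl.2.1).symm
        · rintro ⟨m, hm⟩
          apply Subtype.ext
          show (List.replicate r 0 ++ 1 :: m).drop (r+1) = m
          rw [List.drop_append, List.drop_of_length_le (by simp),
            List.length_replicate, List.nil_append]
          have : r + 1 - r = 1 := by omega
          rw [this, List.drop_one, List.tail_cons]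
      rw [Nat.card_congr hEq, Nat.card_eq_finsetCard]
    · rw [if_neg (by tauto)]
      haveI : IsEmpty {l : List ℕ // IsAscentSeq l ∧ runZeros l = r ∧ l.length = e 0 ∧
          ascents l = e 1 ∧ l.count 0 = e 3} := by
        refine ⟨fun ⟨l, ha, hz, hlen, hasc, hcnt⟩ => ?_⟩
        have hd := decomp r hr l ha hz
        have h5 := congrArg List.length hd
        rw [full_length] at h5
        have h6 := full_count r (l.drop (r+1))
        rw [← hd] at h6
        exact hgood ⟨by omega, by omega⟩
      rw [Nat.card_of_isEmpty, Nat.cast_zero]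
  · rw [if_neg h2, if_neg (by tauto)]

end AuxGF
namespace AuxGF
open Finset MvPowerSeries

noncomputable def F1 (s : ℕ) : PS := Tot 0 (Fslice 1 (Ws s))

lemma F1_def (s : ℕ) : F1 s = Tot 0 (Fslice 1 (Ws s)) := rfl
lemma Vs_def (s : ℕ) : Vs s = deltaS s * (deltaS (s+1))⁻¹ := rfl
lemma Ws_def (s : ℕ) : Ws s = (deltaS s)⁻¹ := rfl

lemma T_ne : (T : PS) ≠ 0 := by
  intro h
  have h2 := congrArg (MvPowerSeries.coeff (Finsupp.single 0 1)) h
  rw [T_def, MvPowerSeries.coeff_X, if_pos rfl, map_zero] at h2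
  exact one_ne_zero h2

lemma sliceOK_shift {j : Fin 4} {g : ℕ → PS} (h : SliceOK j g) :
    SliceOK j (fun n => g (n + 1)) :=
  fun n e he => h (n + 1) e (by omega)

lemma star (s : ℕ) :
    F1 s = U * deltaS s * (deltaS (s+1))⁻¹ * (gammaS (s+1))⁻¹ * F1 (s+1)
      + U * (1 - U) * (1 - T)^s * (deltaS (s+1))⁻¹ * (gammaS (s+1))⁻¹ := by
  have hg : SliceOK 0 (Fslice (Vs s) (Ws s)) := sliceOK_Fslice _ _
  have hfam : (fun n => (1 - Vs s) * Fslice (Vs s) (Ws s) (n+1)) =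
      (fun n => (T * ((1 - Vs s) * Z + Vs s)) * Fslice 1 (Ws s) n +
        ((T * ((U * Ws s - 1) * Vs s)) * Fslice (Vs s) (Ws s) n -
         (T * (U * Ws s * (Vs s)^2)) * Fslice 1 (Ws (s+1)) n)) := by
    funext n
    have h := slice_eq (Vs s) (Ws s) n
    rw [Vs_mul_Ws] at h
    linear_combination h
  have big0 := congrArg (Tot 0) hfam
  rw [tot_mulC (sliceOK_shift hg), tot_add, tot_sub,
    tot_mulC (sliceOK_Fslice 1 (Ws s)), tot_mulC hg,
    tot_mulC (sliceOK_Fslice 1 (Ws (s+1)))] at big0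
  have hsh' : Tot 0 (fun n => Fslice (Vs s) (Ws s) (n+1)) =
      Tot 0 (Fslice (Vs s) (Ws s)) - Fslice (Vs s) (Ws s) 0 := by
    rw [tot_shift hg]; ring
  rw [hsh', Fslice_zero, ← F1_def, ← F1_def] at big0
  have e2 : (T * ((1 - Vs s) * Z + Vs s)) * F1 s
      = (T * (U * Ws s * (Vs s)^2)) * F1 (s+1) - (1 - Vs s) * (U * Vs s * Ws s) := by
    have hk := kernel_eq s
    linear_combination (-1 : PS) * big0 - Tot 0 (Fslice (Vs s) (Ws s)) * hk
  have e3 : T * ((gammaS (s+1) * (deltaS (s+1))⁻¹) * F1 s)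
      = T * ((U * Ws s * (Vs s)^2) * F1 (s+1)
          - (1 - T)^s * (U - 1) * (deltaS (s+1))⁻¹ * (U * Vs s * Ws s)) := by
    have hz := zcoef_eq s
    have ho := one_sub_Vs s
    linear_combination e2 - (T * F1 s) * hz - (U * Vs s * Ws s) * ho
  have e4 := mul_left_cancel₀ T_ne e3
  rw [Vs_def, Ws_def] at e4
  have hD := delta_mul_inv s
  have hDp := delta_mul_inv (s+1)
  have hG := gamma_mul_inv (s+1)
  linear_combination ((gammaS (s+1))⁻¹ * deltaS (s+1)) * e4
    + (deltaS s * deltaS (s+1) * ((deltaS (s+1))⁻¹)^2 * (gammaS (s+1))⁻¹ * F1 (s+1) * U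
       - deltaS (s+1) * ((deltaS (s+1))⁻¹)^2 * (gammaS (s+1))⁻¹ * (1-T)^s * U^2
       + deltaS (s+1) * ((deltaS (s+1))⁻¹)^2 * (gammaS (s+1))⁻¹ * (1-T)^s * U) * hD
    + (- (gammaS (s+1) * (gammaS (s+1))⁻¹ * F1 s)
       + deltaS s * (deltaS (s+1))⁻¹ * (gammaS (s+1))⁻¹ * F1 (s+1) * U
       - (deltaS (s+1))⁻¹ * (gammaS (s+1))⁻¹ * (1-T)^s * U^2
       + (deltaS (s+1))⁻¹ * (gammaS (s+1))⁻¹ * (1-T)^s * U) * hDp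
    + (- F1 s) * hG

/-- the summands in the theorem. -/
noncomputable def cS (s : ℕ) : PS :=
  U ^ s * (1 - T) ^ s * (deltaS s)⁻¹ * (deltaS (s + 1))⁻¹ *
    ∏ i ∈ Finset.Icc 1 (s + 1), (gammaS i)⁻¹

noncomputable def Dprod (N : ℕ) : PS :=
  U ^ N * ((deltaS N)⁻¹ * ∏ i ∈ Finset.Icc 1 N, (gammaS i)⁻¹)

lemma Dprod_zero : Dprod 0 = 1 := by
  rw [Dprod]
  rw [show (Finset.Icc 1 0 : Finset ℕ) = ∅ from Finset.Icc_eq_empty (by omega)]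
  rw [show deltaS 0 = 1 from rfl]
  simp

lemma iterF1 (N : ℕ) :
    F1 0 = (∑ s ∈ Finset.range N, U * (1 - U) * cS s) + Dprod N * F1 N := by
  induction N with
  | zero => rw [Dprod_zero]; simp
  | succ N ih =>
    rw [ih, Finset.sum_range_succ, star N]
    have hp : ∏ i ∈ Finset.Icc 1 (N+1), (gammaS i)⁻¹
        = (∏ i ∈ Finset.Icc 1 N, (gammaS i)⁻¹) * (gammaS (N+1))⁻¹ :=
      Finset.prod_Icc_succ_top (by omega) _
    rw [Dprod, Dprod, cS, hp]
    have hD := delta_mul_inv N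
    linear_combination (U^(N+1) * (∏ i ∈ Finset.Icc 1 N, (gammaS i)⁻¹) *
      (deltaS (N+1))⁻¹ * (gammaS (N+1))⁻¹ * F1 (N+1)) * hD

lemma sliceOK_cS : SliceOK 1 cS := by
  intro s e he
  have h : cS s = (X 1 : PS)^s * ((1-T)^s * ((deltaS s)⁻¹ * ((deltaS (s+1))⁻¹ *
      ∏ i ∈ Finset.Icc 1 (s+1), (gammaS i)⁻¹))) := by
    rw [cS, U_def]; ring
  rw [h]
  exact coeff_Xpow_mul_eq_zero he _

lemma F1_zero_eq : F1 0 = U * (1 - U) * Tot 1 cS := by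
  ext e
  have hiter := congrArg (MvPowerSeries.coeff e) (iterF1 (e 1 + 1))
  rw [map_add, map_sum] at hiter
  have hzero : MvPowerSeries.coeff e (Dprod (e 1 + 1) * F1 (e 1 + 1)) = 0 := by
    have h : Dprod (e 1 + 1) * F1 (e 1 + 1) = (X 1 : PS)^(e 1 + 1) *
        (((deltaS (e 1 + 1))⁻¹ * ∏ i ∈ Finset.Icc 1 (e 1 + 1), (gammaS i)⁻¹) *
          F1 (e 1 + 1)) := by
      rw [Dprod, U_def]; ring
    rw [h]
    exact coeff_Xpow_mul_eq_zero (by omega) _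
  rw [hzero, add_zero] at hiter
  have hmul : U * (1 - U) * Tot 1 cS = Tot 1 (fun s => (U * (1 - U)) * cS s) := by
    rw [tot_mulC sliceOK_cS]
  rw [hiter, hmul, coeff_tot]

lemma GrOne_bridge (r : ℕ) (hr : 1 ≤ r) :
    GrOne r = T ^ (r + 1) * Z ^ r * Tot 0 (Fslice 1 1) := by
  ext e
  rw [coeff_GrOne r hr e, coeff_prod_side r e]

end AuxGF

open AuxGF in
theorem GrOne_eq_series (r : ℕ) (hr : 1 ≤ r) :
    ∃ S : MvPowerSeries (Fin 4) ℚ,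
      HasPSSum (fun s : ℕ =>
        U ^ s * (1 - T) ^ s * (deltaS s)⁻¹ * (deltaS (s + 1))⁻¹ *
          ∏ i ∈ Finset.Icc 1 (s + 1), (gammaS i)⁻¹) S ∧
      GrOne r = T ^ (r + 1) * Z ^ r * U * (1 - U) * S := by
  refine ⟨Tot 1 cS, ?_, ?_⟩
  · intro e
    refine ⟨Finset.range (e 1 + 1), ?_, ?_⟩
    · intro s hs
      rw [Finset.mem_range, not_lt] at hs
      exact sliceOK_cS s e (by omega)
    · rw [coeff_tot]
      rfl
  · have hW0 : Ws 0 = 1 := by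
      rw [Ws_def, show deltaS 0 = 1 from rfl, inv_one]
    have hF : Tot 0 (Fslice 1 1) = F1 0 := by rw [F1_def, hW0]
    rw [GrOne_bridge r hr, hF, F1_zero_eq]
    ring
end

section
/- The series H satisfies the functional equation (v - 1 - tv(1-u))·H(u,v,z,t) = tz(v-1) + t(z(v-1) - v)·H(u,1,z,t) + t·u·v^2·H(uv,1,z,t), where H(u,1,z,t) is H with v specialized to 1 and H(uv,1,z,t) is H(u,1,z,t) with u replaced by the product uv. -/
open MvPowerSeries

/-- `H(u,v,z,t) = Σ_w u^{asc(w)} v^{last(w)} z^{zeros(w)} t^{length(w)}` over all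
nonempty ascent sequences `w`. -/
noncomputable def H : MvPowerSeries (Fin 4) ℚ :=
  fun d => (Nat.card {l : List ℕ // IsAscentSeq l ∧ l ≠ [] ∧ l.length = d 0 ∧
    ascents l = d 1 ∧ l.getLast? = some (d 2) ∧ l.count 0 = d 3} : ℚ)

/-- `H(u,1,z,t)` : the series `H` with `v` specialized to `1`. -/
noncomputable def HOne : MvPowerSeries (Fin 4) ℚ :=
  fun d => if d 2 = 0 then
    (Nat.card {l : List ℕ // IsAscentSeq l ∧ l ≠ [] ∧ l.length = d 0 ∧
      ascents l = d 1 ∧ l.count 0 = d 3} : ℚ)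
  else 0

/-- `H(uv,1,z,t)` : the series `H(u,1,z,t)` with `u` replaced by the product `uv`. -/
noncomputable def HUV : MvPowerSeries (Fin 4) ℚ :=
  fun d => if d 1 = d 2 then
    (Nat.card {l : List ℕ // IsAscentSeq l ∧ l ≠ [] ∧ l.length = d 0 ∧
      ascents l = d 1 ∧ l.count 0 = d 3} : ℚ)
  else 0

lemma ascents_nil : ascents [] = 0 := rfl
lemma ascents_single (a : ℕ) : ascents [a] = 0 := rfl

lemma ascents_cons_cons (a b : ℕ) (t : List ℕ) :
    ascents (a :: b :: t) = ascents (b :: t) + (if a < b then 1 else 0) := by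
  simp [ascents, List.countP_cons]

lemma ascents_concat (w : List ℕ) (x y : ℕ) (h : w.getLast? = some y) :
    ascents (w ++ [x]) = ascents w + (if y < x then 1 else 0) := by
  induction w with
  | nil => simp at h
  | cons a t ih =>
    cases t with
    | nil =>
      simp [List.getLast?] at h
      subst h
      simp [ascents_cons_cons, ascents_single, ascents_nil]
    | cons b t' =>
      have h' : (b :: t').getLast? = some y := by
        rwa [List.getLast?_cons_cons] at h
      have e1 : a :: b :: t' ++ [x] = a :: b :: (t' ++ [x]) := by simp
      rw [e1, ascents_cons_cons a b (t' ++ [x]), ← List.cons_append, ih h',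
        ascents_cons_cons]
      ring

lemma ascents_le_concat (w : List ℕ) (x : ℕ) : ascents w ≤ ascents (w ++ [x]) := by
  rcases w.eq_nil_or_concat with rfl | ⟨t, z, rfl⟩
  · simp [ascents_nil]
  · rw [List.concat_eq_append,
      ascents_concat (t ++ [z]) x z List.getLast?_concat]
    omega

lemma ascents_take_le (w : List ℕ) (i : ℕ) : ascents (w.take i) ≤ ascents w := by
  induction w using List.reverseRecOn with
  | nil => simp
  | append_singleton t x ih =>
    rcases le_or_gt i t.length with h | h
    · rw [List.take_append_of_le_length h]
      exact le_trans (ih) (ascents_le_concat t x)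
    · rw [List.take_of_length_le (by simp; omega)]

lemma isAscentSeq_nil : IsAscentSeq [] := by intro i h; simp at h

lemma isAscentSeq_concat (w : List ℕ) (x : ℕ) :
    IsAscentSeq (w ++ [x]) ↔
      IsAscentSeq w ∧ x ≤ (if w = [] then 0 else ascents w + 1) := by
  constructor
  · intro h
    constructor
    · intro i hi
      have h2 : i < (w ++ [x]).length := by simp; omega
      have := h i h2
      rw [List.get_eq_getElem, List.getElem_append_left hi] at this
      rw [List.take_append_of_le_length (le_of_lt hi)] at this
      exact this
    · have h2 : w.length < (w ++ [x]).length := by simp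
      have := h w.length h2
      rw [List.get_eq_getElem, List.getElem_concat_length rfl] at this
      rw [List.take_append_of_le_length le_rfl, List.take_length] at this
      rcases eq_or_ne w [] with rfl | hw
      · simpa using this
      · have : x ≤ ascents w + 1 := by
          simpa [List.length_eq_zero_iff.not.mpr hw,
            show w.length ≠ 0 by simpa [List.length_eq_zero_iff] using hw] using this
        simp [hw, this]
  · rintro ⟨h1, h2⟩ i hi
    rcases lt_or_ge i w.length with h | h
    · rw [List.get_eq_getElem, List.getElem_append_left h,
        List.take_append_of_le_length (le_of_lt h)]
      exact h1 i h
    · have hi' : i = w.length := by simp at hi; omega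
      subst hi'
      rw [List.get_eq_getElem, List.getElem_concat_length rfl,
        List.take_append_of_le_length le_rfl, List.take_length]
      rcases eq_or_ne w [] with rfl | hw
      · simpa using h2
      · have hl : w.length ≠ 0 := by simpa [List.length_eq_zero_iff] using hw
        simp only [hl, if_neg, if_false]
        simpa [hw] using h2

lemma getLast_le_ascents (w : List ℕ) (y : ℕ) (hw : IsAscentSeq w)
    (hy : w.getLast? = some y) : y ≤ ascents w + 1 := by
  have hne : w ≠ [] := by rintro rfl; simp at hy
  rcases w.eq_nil_or_concat with rfl | ⟨t, x, rfl⟩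
  · simp at hy
  · rw [List.concat_eq_append] at hy hw ⊢
    rw [List.getLast?_concat] at hy
    obtain rfl : y = x := by simpa using hy.symm
    rw [isAscentSeq_concat] at hw
    rcases hw with ⟨h1, h2⟩
    split at h2
    · omega
    · have := ascents_le_concat t y
      omega

/-- bound for next letter -/
def bnd (w : List ℕ) : ℕ := if w = [] then 0 else ascents w + 1

/-- Finset of ascent sequences of length `n`. -/
def A : ℕ → Finset (List ℕ)
  | 0 => {[]}
  | n + 1 => (A n).biUnion fun w => (Finset.range (bnd w + 1)).image fun x => w ++ [x]

lemma mem_A {n : ℕ} {l : List ℕ} : l ∈ A n ↔ IsAscentSeq l ∧ l.length = n := by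
  induction n generalizing l with
  | zero =>
    simp only [A, Finset.mem_singleton, List.length_eq_zero_iff]
    constructor
    · rintro rfl; exact ⟨isAscentSeq_nil, rfl⟩
    · rintro ⟨-, rfl⟩; rfl
  | succ n ih =>
    simp only [A, Finset.mem_biUnion, Finset.mem_image, Finset.mem_range]
    constructor
    · rintro ⟨w, hw, x, hx, rfl⟩
      rcases ih.mp hw with ⟨h1, h2⟩
      refine ⟨(isAscentSeq_concat w x).mpr ⟨h1, ?_⟩, by simp [h2]⟩
      unfold bnd at hx; omega
    · rintro ⟨h1, h2⟩
      have hne : l ≠ [] := by rintro rfl; simp at h2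
      obtain ⟨t, x, rfl⟩ := l.eq_nil_or_concat.resolve_left hne
      rw [List.concat_eq_append] at h1 h2 ⊢
      rcases (isAscentSeq_concat t x).mp h1 with ⟨h3, h4⟩
      refine ⟨t, ih.mpr ⟨h3, by simp at h2; omega⟩, x, ?_, rfl⟩
      unfold bnd; omega

open Classical in
/-- count of ascent sequences by (length, ascents, last, zeros) -/
noncomputable def Nc (n a l z : ℕ) : ℕ :=
  ((A n).filter fun w => ascents w = a ∧ w.getLast? = some l ∧ w.count 0 = z).card

open Classical in
/-- count of ascent sequences by (length, ascents, zeros) -/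
noncomputable def Pc (n a z : ℕ) : ℕ :=
  ((A n).filter fun w => w ≠ [] ∧ ascents w = a ∧ w.count 0 = z).card

open Classical in
lemma natCard_eq_Nc (n a l z : ℕ) :
    Nat.card {w : List ℕ // IsAscentSeq w ∧ w ≠ [] ∧ w.length = n ∧
      ascents w = a ∧ w.getLast? = some l ∧ w.count 0 = z} = Nc n a l z := by
  have hset : {w : List ℕ | IsAscentSeq w ∧ w ≠ [] ∧ w.length = n ∧
      ascents w = a ∧ w.getLast? = some l ∧ w.count 0 = z} =
      ↑((A n).filter fun w => ascents w = a ∧ w.getLast? = some l ∧ w.count 0 = z) := by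
    ext w
    simp only [Set.mem_setOf_eq, Finset.coe_filter, mem_A]
    constructor
    · tauto
    · rintro ⟨⟨h1, h2⟩, h3, h4, h5⟩
      exact ⟨h1, by rintro rfl; simp at h4, h2, h3, h4, h5⟩
  unfold Nc
  rw [← Set.ncard_coe_finset, ← hset]
  exact Nat.card_coe_set_eq _

open Classical in
lemma natCard_eq_Pc (n a z : ℕ) :
    Nat.card {w : List ℕ // IsAscentSeq w ∧ w ≠ [] ∧ w.length = n ∧
      ascents w = a ∧ w.count 0 = z} = Pc n a z := by
  have hset : {w : List ℕ | IsAscentSeq w ∧ w ≠ [] ∧ w.length = n ∧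
      ascents w = a ∧ w.count 0 = z} =
      ↑((A n).filter fun w => w ≠ [] ∧ ascents w = a ∧ w.count 0 = z) := by
    ext w
    simp only [Set.mem_setOf_eq, Finset.coe_filter, mem_A]
    tauto
  unfold Pc
  rw [← Set.ncard_coe_finset, ← hset]
  exact Nat.card_coe_set_eq _

lemma Nc_zero (a l z : ℕ) : Nc 0 a l z = 0 := by
  unfold Nc
  rw [Finset.card_eq_zero, Finset.filter_eq_empty_iff]
  intro w hw
  have : w = [] := (by simpa [mem_A, List.length_eq_zero_iff] using hw : _ ∧ _).2
  subst this
  simp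

lemma Pc_zero (a z : ℕ) : Pc 0 a z = 0 := by
  unfold Pc
  rw [Finset.card_eq_zero, Finset.filter_eq_empty_iff]
  intro w hw
  have : w = [] := (by simpa [mem_A, List.length_eq_zero_iff] using hw : _ ∧ _).2
  subst this
  simp

lemma A_one : A 1 = {[0]} := by
  ext l
  simp only [mem_A, Finset.mem_singleton]
  constructor
  · rintro ⟨h1, h2⟩
    have hne : l ≠ [] := by rintro rfl; simp at h2
    obtain ⟨t, x, rfl⟩ := l.eq_nil_or_concat.resolve_left hne
    rw [List.concat_eq_append] at h2 ⊢
    have ht : t = [] := by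
      simp at h2
      exact h2
    subst ht
    rcases (isAscentSeq_concat [] x).mp (by rwa [List.concat_eq_append] at h1) with ⟨-, h4⟩
    simp at h4
    simp [h4]
  · rintro rfl
    refine ⟨?_, rfl⟩
    rw [show ([0] : List ℕ) = [] ++ [0] by simp, isAscentSeq_concat]
    exact ⟨isAscentSeq_nil, by simp⟩

lemma Nc_one (a l z : ℕ) :
    Nc 1 a l z = if a = 0 ∧ l = 0 ∧ z = 1 then 1 else 0 := by
  unfold Nc
  rw [A_one]
  rcases Classical.em (a = 0 ∧ l = 0 ∧ z = 1) with ⟨rfl, rfl, rfl⟩ | h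
  · rw [if_pos ⟨rfl, rfl, rfl⟩]
    rw [Finset.filter_singleton, if_pos]
    · simp
    · refine ⟨rfl, rfl, rfl⟩
  · rw [if_neg h, Finset.card_eq_zero, Finset.filter_eq_empty_iff]
    intro w hw
    rw [Finset.mem_singleton] at hw
    subst hw
    rintro ⟨h1, h2, h3⟩
    simp [ascents_single] at h1 h2 h3
    exact h ⟨h1.symm, h2.symm, h3.symm⟩

lemma Nc_last_big (n a l z : ℕ) (h : a + 1 < l) : Nc n a l z = 0 := by
  unfold Nc
  rw [Finset.card_eq_zero, Finset.filter_eq_empty_iff]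
  intro w hw
  rintro ⟨h1, h2, -⟩
  have := getLast_le_ascents w l (mem_A.mp hw).1 h2
  omega

lemma Nc_zeros_zero (n a l : ℕ) : Nc n a l 0 = 0 := by
  unfold Nc
  rw [Finset.card_eq_zero, Finset.filter_eq_empty_iff]
  intro w hw
  rintro ⟨-, h2, h3⟩
  have hne : w ≠ [] := by rintro rfl; simp at h2
  have hlen : 0 < w.length := List.length_pos_iff.mpr hne
  have h0 : w.get ⟨0, hlen⟩ ≤ 0 := by simpa using (mem_A.mp hw).1 0 hlen
  have hmem : (0 : ℕ) ∈ w := by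
    have : w.get ⟨0, hlen⟩ ∈ w := w.get_mem _
    rwa [Nat.le_zero.mp h0] at this
  rw [← List.count_pos_iff] at hmem
  omega

open Classical in
lemma master (n a l z : ℕ) (hn : n ≠ 0) :
    Nc (n + 1) a l z =
      ((A n).filter fun w => l ≤ ascents w + 1 ∧
        ascents w + (if w.getLast?.getD 0 < l then 1 else 0) = a ∧
        w.count 0 + (if l = 0 then 1 else 0) = z).card := by
  unfold Nc
  refine Finset.card_bij' (fun v _ => v.dropLast) (fun w _ => w ++ [l]) ?_ ?_ ?_ ?_
  · rintro v hv
    rw [Finset.mem_filter] at hv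
    rcases hv with ⟨hA, ha, hl, hz⟩
    have hne : v ≠ [] := by rintro rfl; simp at hl
    have hl' : v.getLast hne = l := by
      rw [List.getLast?_eq_getLast hne] at hl
      simpa using hl
    have hv' : v.dropLast ++ [l] = v := by
      rw [← hl']; exact List.dropLast_append_getLast hne
    have hAS : IsAscentSeq v := (mem_A.mp hA).1
    have hlen : v.length = n + 1 := (mem_A.mp hA).2
    have hASd : IsAscentSeq v.dropLast ∧ l ≤ if v.dropLast = [] then 0 else
        ascents v.dropLast + 1 := by
      rw [← isAscentSeq_concat, hv']; exact hAS
    have hdne : v.dropLast ≠ [] := by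
      have := List.length_dropLast (xs := v)
      rw [hlen] at this
      intro hc
      rw [hc] at this
      simp at this
      omega
    have hy : v.dropLast.getLast? = some (v.dropLast.getLast hdne) :=
      List.getLast?_eq_getLast hdne
    rw [Finset.mem_filter]
    have hmemA : v.dropLast ∈ A n := by
      rw [mem_A]
      refine ⟨hASd.1, ?_⟩
      have := List.length_dropLast (xs := v)
      omega
    have hasc : ascents v = ascents v.dropLast +
        (if v.dropLast.getLast?.getD 0 < l then 1 else 0) := by
      conv_lhs => rw [← hv']
      rw [ascents_concat _ l _ hy, hy]
      simp
    have hcnt : v.count 0 = v.dropLast.count 0 + (if l = 0 then 1 else 0) := by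
      conv_lhs => rw [← hv']
      rw [List.count_append]
      congr 1
      rw [List.count_singleton']
    refine ⟨hmemA, ?_, ?_, ?_⟩
    · rcases hASd.2 with h2
      rw [if_neg hdne] at h2
      exact h2
    · rw [← hasc]; exact ha
    · rw [← hcnt]; exact hz
  · rintro w hw
    rw [Finset.mem_filter] at hw
    rcases hw with ⟨hA, hb, ha, hz⟩
    have hne : w ≠ [] := by
      intro hc
      rw [mem_A, hc] at hA
      simp at hA
      omega
    have hy : w.getLast? = some (w.getLast hne) := List.getLast?_eq_getLast hne
    rw [Finset.mem_filter]
    refine ⟨?_, ?_, List.getLast?_concat, ?_⟩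
    · rw [mem_A]
      constructor
      · rw [isAscentSeq_concat]
        exact ⟨(mem_A.mp hA).1, by rw [if_neg hne]; exact hb⟩
      · have := (mem_A.mp hA).2
        simp [this]
    · rw [ascents_concat _ l _ hy, ← ha, hy]
      simp
    · rw [List.count_append, ← hz, List.count_singleton']
  · rintro v hv
    rw [Finset.mem_filter] at hv
    have hne : v ≠ [] := by rintro rfl; simp at hv
    have hl' : v.getLast hne = l := by
      have := hv.2.2.1
      rw [List.getLast?_eq_getLast hne] at this
      simpa using this
    have h2 := List.dropLast_append_getLast hne
    rw [hl'] at h2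
    exact h2
  · rintro w _
    exact List.dropLast_concat ..

lemma mem_A_ne_nil {n : ℕ} (hn : n ≠ 0) {w : List ℕ} (h : w ∈ A n) : w ≠ [] := by
  intro hc
  rw [mem_A, hc] at h
  simp at h
  omega

lemma getLast?_getD {w : List ℕ} (h : w ≠ []) :
    w.getLast? = some (w.getLast?.getD 0) := by
  rw [List.getLast?_eq_getLast h]
  rfl

lemma getD_le {n : ℕ} (hn : n ≠ 0) {w : List ℕ} (h : w ∈ A n) :
    w.getLast?.getD 0 ≤ ascents w + 1 :=
  getLast_le_ascents w _ (mem_A.mp h).1 (getLast?_getD (mem_A_ne_nil hn h))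

open Classical in
lemma Pc_eq_sum (n a z : ℕ) (hn : n ≠ 0) :
    Pc n a z = ∑ l' ∈ Finset.range (a + 2), Nc n a l' z := by
  unfold Pc
  rw [Finset.card_eq_sum_card_fiberwise (f := fun w => w.getLast?.getD 0)
    (t := Finset.range (a + 2))]
  · refine Finset.sum_congr rfl fun l' _ => ?_
    unfold Nc
    rw [Finset.filter_filter]
    refine congrArg _ (Finset.filter_congr fun w hw => ?_)
    constructor
    · rintro ⟨⟨h1, h2, h3⟩, h4⟩
      refine ⟨h2, ?_, h3⟩
      rw [getLast?_getD h1, h4]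
    · rintro ⟨h2, h4, h3⟩
      have h1 : w ≠ [] := by rintro rfl; simp at h4
      refine ⟨⟨h1, h2, h3⟩, ?_⟩
      rw [h4]
      rfl
  · intro w hw
    rw [Finset.mem_coe, Finset.mem_filter] at hw
    rw [Finset.mem_coe, Finset.mem_range]
    beta_reduce
    have := getD_le hn hw.1
    have ha := hw.2.2.1
    omega

open Classical in
lemma Nc_succ_zero (n a z : ℕ) (hn : n ≠ 0) :
    Nc (n + 1) a 0 (z + 1) = Pc n a z := by
  rw [master n a 0 (z + 1) hn]
  unfold Pc
  refine congrArg _ (Finset.filter_congr fun w hw => ?_)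
  constructor
  · rintro ⟨-, h2, h3⟩
    simp at h2 h3
    exact ⟨mem_A_ne_nil hn hw, by omega, by omega⟩
  · rintro ⟨h1, h2, h3⟩
    refine ⟨by omega, by simp; omega, by simp; omega⟩

open Classical in
lemma Nc_succ_pos (n a l z : ℕ) (hn : n ≠ 0) (hl : l ≠ 0) :
    Nc (n + 1) a l z = (∑ l' ∈ Finset.Icc l (a + 1), Nc n a l' z) +
      (if 1 ≤ a ∧ l ≤ a then ∑ l' ∈ Finset.range l, Nc n (a - 1) l' z else 0) := by
  rw [master n a l z hn]
  rw [← Finset.card_filter_add_card_filter_not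
    (p := fun w => l ≤ w.getLast?.getD 0)]
  congr 1
  · -- piece 1 : no new ascent
    rw [Finset.filter_filter,
      Finset.card_eq_sum_card_fiberwise (f := fun w => w.getLast?.getD 0)
        (t := Finset.Icc l (a + 1))]
    · refine Finset.sum_congr rfl fun l' hl' => ?_
      rw [Finset.mem_Icc] at hl'
      unfold Nc
      rw [Finset.filter_filter]
      refine congrArg _ (Finset.filter_congr fun w hw => ?_)
      have hwne := mem_A_ne_nil hn hw
      constructor
      · rintro ⟨⟨⟨h1, h2, h3⟩, h4⟩, h5⟩
        rw [if_neg (by omega)] at h2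
        rw [if_neg hl] at h3
        refine ⟨by omega, ?_, by omega⟩
        rw [getLast?_getD hwne, h5]
      · rintro ⟨h2, h4, h3⟩
        have hgd : w.getLast?.getD 0 = l' := by rw [h4]; rfl
        refine ⟨⟨⟨by omega, ?_, ?_⟩, by omega⟩, hgd⟩
        · rw [if_neg (by omega)]; omega
        · rw [if_neg hl]; omega
    · intro w hw
      rw [Finset.mem_coe, Finset.mem_filter] at hw
      rcases hw with ⟨hA, ⟨h1, h2, h3⟩, h4⟩
      rw [Finset.mem_coe, Finset.mem_Icc]
      beta_reduce
      have h5 := getD_le hn hA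
      rw [if_neg (by omega)] at h2
      omega
  · -- piece 2 : new ascent
    rw [Finset.filter_filter]
    by_cases hc : 1 ≤ a ∧ l ≤ a
    · rw [if_pos hc,
        Finset.card_eq_sum_card_fiberwise (f := fun w => w.getLast?.getD 0)
          (t := Finset.range l)]
      · refine Finset.sum_congr rfl fun l' hl' => ?_
        rw [Finset.mem_range] at hl'
        unfold Nc
        rw [Finset.filter_filter]
        refine congrArg _ (Finset.filter_congr fun w hw => ?_)
        have hwne := mem_A_ne_nil hn hw
        constructor
        · rintro ⟨⟨⟨h1, h2, h3⟩, h4⟩, h5⟩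
          rw [not_le] at h4
          rw [if_pos h4] at h2
          rw [if_neg hl] at h3
          refine ⟨by omega, ?_, by omega⟩
          rw [getLast?_getD hwne, h5]
        · rintro ⟨h2, h4, h3⟩
          have hgd : w.getLast?.getD 0 = l' := by rw [h4]; rfl
          refine ⟨⟨⟨?_, ?_, ?_⟩, by omega⟩, hgd⟩
          · omega
          · rw [if_pos (by omega)]; omega
          · rw [if_neg hl]; omega
      · intro w hw
        rw [Finset.mem_coe, Finset.mem_filter] at hw
        rcases hw with ⟨hA, ⟨h1, h2, h3⟩, h4⟩
        rw [Finset.mem_coe, Finset.mem_range]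
        beta_reduce
        omega
    · rw [if_neg hc, Finset.card_eq_zero, Finset.filter_eq_empty_iff]
      rintro w hw ⟨⟨h1, h2, h3⟩, h4⟩
      rw [not_le] at h4
      rw [if_pos h4] at h2
      omega

lemma Pc_zeros_zero (n a : ℕ) : Pc n a 0 = 0 := by
  unfold Pc
  rw [Finset.card_eq_zero, Finset.filter_eq_empty_iff]
  intro w hw
  rintro ⟨h1, -, h3⟩
  have hlen : 0 < w.length := List.length_pos_iff.mpr h1
  have h0 : w.get ⟨0, hlen⟩ ≤ 0 := by simpa using (mem_A.mp hw).1 0 hlen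
  have hmem : (0 : ℕ) ∈ w := by
    have : w.get ⟨0, hlen⟩ ∈ w := w.get_mem _
    rwa [Nat.le_zero.mp h0] at this
  rw [← List.count_pos_iff] at hmem
  omega

lemma sum_Icc_bot (g : ℕ → ℕ) {x y : ℕ} (h : x ≤ y) :
    ∑ i ∈ Finset.Icc x y, g i = g x + ∑ i ∈ Finset.Icc (x + 1) y, g i := by
  rw [Finset.Icc_eq_cons_Ioc h, Finset.sum_cons, Finset.Icc_add_one_left_eq_Ioc]

lemma Pc_eq_sum_Icc (n a z : ℕ) (hn : n ≠ 0) :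
    Pc n a z = ∑ l' ∈ Finset.Icc 0 (a + 1), Nc n a l' z := by
  rw [Pc_eq_sum n a z hn, Finset.range_eq_Ico, ← Finset.Ico_add_one_right_eq_Icc]
  rfl

lemma key (n a l z : ℕ) :
    (if 1 ≤ l then (Nc n a (l - 1) z : ℚ) else 0) - (Nc n a l z : ℚ) -
        (if 1 ≤ n ∧ 1 ≤ l then (Nc (n - 1) a (l - 1) z : ℚ) else 0) +
        (if 1 ≤ n ∧ 1 ≤ a ∧ 1 ≤ l then (Nc (n - 1) (a - 1) (l - 1) z : ℚ) else 0) =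
      (if n = 1 ∧ a = 0 ∧ l = 1 ∧ z = 1 then 1 else 0) -
        (if n = 1 ∧ a = 0 ∧ l = 0 ∧ z = 1 then 1 else 0) +
        (if 1 ≤ n ∧ l = 1 ∧ 1 ≤ z then (Pc (n - 1) a (z - 1) : ℚ) else 0) -
        (if 1 ≤ n ∧ l = 0 ∧ 1 ≤ z then (Pc (n - 1) a (z - 1) : ℚ) else 0) -
        (if 1 ≤ n ∧ l = 1 then (Pc (n - 1) a z : ℚ) else 0) +
        (if 1 ≤ n ∧ 1 ≤ a ∧ 2 ≤ l ∧ a - 1 = l - 2 then (Pc (n - 1) (a - 1) z : ℚ)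
          else 0) := by
  rcases n with _ | n
  · norm_num [Nc_zero]
  rcases n with _ | m
  · -- n = 1
    rcases l with _ | _ | l <;> rcases z with _ | _ | z <;> rcases a with _ | a <;>
      simp [Nc_one, Pc_zero, Nc_zero]
  · -- n = m + 2
    have hn2 : (1 : ℕ) ≤ m + 2 := by omega
    have hne : ¬ (m + 2 = 1) := by omega
    have hsub : m + 2 - 1 = m + 1 := rfl
    simp only [hn2, hne, hsub, true_and, false_and, if_false, if_true]
    rcases l with _ | l
    · -- l = 0
      rcases z with _ | z
      · simp [Nc_zeros_zero]
      · rw [Nc_succ_zero (m + 1) a z (by omega)]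
        norm_num
    · rcases l with _ | l
      · -- l = 1
        norm_num
        rcases z with _ | z
        · simp [Nc_zeros_zero, Pc_zeros_zero]
        · have ha1 := Nc_succ_pos (m + 1) a 1 (z + 1) (by omega) one_ne_zero
          have hp : Pc (m + 1) a (z + 1) = Nc (m + 1) a 0 (z + 1) +
              ∑ l' ∈ Finset.Icc 1 (a + 1), Nc (m + 1) a l' (z + 1) := by
            rw [Pc_eq_sum_Icc (m + 1) a (z + 1) (by omega)]
            exact sum_Icc_bot _ (by omega)
          rw [Nc_succ_zero (m + 1) a z (by omega), ha1, hp,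
            if_pos (show 1 ≤ z + 1 by omega), Finset.sum_range_one,
            show z + 1 - 1 = z from rfl]
          by_cases ha : 1 ≤ a
          · rw [if_pos (show 1 ≤ a ∧ 1 ≤ a from ⟨ha, ha⟩), if_pos ha]
            push_cast
            ring
          · rw [if_neg (show ¬(1 ≤ a ∧ 1 ≤ a) by omega), if_neg ha]
            push_cast
            ring
      · -- l = l + 2
        norm_num
        simp only [show l + 1 + 1 - 2 = l from rfl]
        have e2 := Nc_succ_pos (m + 1) a (l + 1) z (by omega) (by omega)
        have e1 := Nc_succ_pos (m + 1) a (l + 1 + 1) z (by omega) (by omega)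
        rw [e1, e2]
        by_cases hIcc : l + 1 ≤ a + 1
        · rw [sum_Icc_bot (fun l' => Nc (m + 1) a l' z) hIcc]
          by_cases ha : 1 ≤ a
          · by_cases h2 : l + 1 + 1 ≤ a
            · rw [if_pos (show 1 ≤ a ∧ l + 1 + 1 ≤ a from ⟨ha, h2⟩),
                if_pos (show 1 ≤ a ∧ l + 1 ≤ a from ⟨ha, by omega⟩),
                if_pos ha, if_neg (show ¬(1 ≤ a ∧ a - 1 = l) by omega),
                Finset.sum_range_succ (fun l' => Nc (m + 1) (a - 1) l' z) (l + 1)]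
              push_cast
              ring
            · by_cases heq : a = l + 1
              · rw [if_neg (show ¬(1 ≤ a ∧ l + 1 + 1 ≤ a) by omega),
                  if_pos (show 1 ≤ a ∧ l + 1 ≤ a from ⟨ha, by omega⟩),
                  if_pos ha, if_pos (show 1 ≤ a ∧ a - 1 = l from ⟨ha, by omega⟩),
                  Pc_eq_sum (m + 1) (a - 1) z (by omega),
                  show a - 1 + 2 = l + 1 + 1 from by omega,
                  Finset.sum_range_succ (fun l' => Nc (m + 1) (a - 1) l' z) (l + 1),
                  show a - 1 = l from by omega]
                push_cast
                ring
              · rw [if_neg (show ¬(1 ≤ a ∧ l + 1 + 1 ≤ a) by omega),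
                  if_neg (show ¬(1 ≤ a ∧ l + 1 ≤ a) by omega),
                  if_pos ha, if_neg (show ¬(1 ≤ a ∧ a - 1 = l) by omega),
                  Nc_last_big (m + 1) (a - 1) (l + 1) z (by omega)]
                push_cast
                ring
          · rw [if_neg (show ¬(1 ≤ a ∧ l + 1 + 1 ≤ a) by omega),
              if_neg (show ¬(1 ≤ a ∧ l + 1 ≤ a) by omega),
              if_neg ha, if_neg (show ¬(1 ≤ a ∧ a - 1 = l) by omega)]
            push_cast
            ring
        · rw [Finset.Icc_eq_empty (show ¬(l + 1 ≤ a + 1) from hIcc),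
            Finset.Icc_eq_empty (show ¬(l + 1 + 1 ≤ a + 1) by omega),
            Finset.sum_empty,
            if_neg (show ¬(1 ≤ a ∧ l + 1 + 1 ≤ a) by omega),
            if_neg (show ¬(1 ≤ a ∧ l + 1 ≤ a) by omega),
            if_neg (show ¬(1 ≤ a ∧ a - 1 = l) by omega),
            Nc_last_big (m + 1) a (l + 1) z (by omega)]
          by_cases ha : 1 ≤ a
          · rw [if_pos ha, Nc_last_big (m + 1) (a - 1) (l + 1) z (by omega)]
            norm_num
          · rw [if_neg ha]
            norm_num

lemma finsupp_eq_iff4 (e f : Fin 4 →₀ ℕ) :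
    e = f ↔ e 0 = f 0 ∧ e 1 = f 1 ∧ e 2 = f 2 ∧ e 3 = f 3 := by
  constructor
  · rintro rfl; exact ⟨rfl, rfl, rfl, rfl⟩
  · rintro ⟨h0, h1, h2, h3⟩
    ext j; fin_cases j <;> assumption

lemma ite_collapse {p q : Prop} [Decidable p] [Decidable q] (x : ℚ) :
    (if p then (if q then x else 0) else 0) = if p ∧ q then x else 0 := by
  by_cases h : p <;> by_cases h' : q <;> simp [h, h']

lemma coeff_X_mul4 (i : Fin 4) (φ : MvPowerSeries (Fin 4) ℚ) (d : Fin 4 →₀ ℕ) :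
    MvPowerSeries.coeff d (MvPowerSeries.X i * φ) =
      if 1 ≤ d i then MvPowerSeries.coeff (d - Finsupp.single i 1) φ else 0 := by
  rw [show (MvPowerSeries.X i : MvPowerSeries (Fin 4) ℚ) =
      MvPowerSeries.monomial (Finsupp.single i 1) 1 from rfl,
    MvPowerSeries.coeff_monomial_mul]
  simp [Finsupp.single_le_iff]

lemma H_coeff (d : Fin 4 →₀ ℕ) :
    MvPowerSeries.coeff d H = (Nc (d 0) (d 1) (d 2) (d 3) : ℚ) := by
  rw [MvPowerSeries.coeff_apply]
  unfold H
  beta_reduce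
  exact_mod_cast congrArg (Nat.cast : ℕ → ℚ) (natCard_eq_Nc (d 0) (d 1) (d 2) (d 3))

lemma HOne_coeff (d : Fin 4 →₀ ℕ) :
    MvPowerSeries.coeff d HOne =
      if d 2 = 0 then (Pc (d 0) (d 1) (d 3) : ℚ) else 0 := by
  rw [MvPowerSeries.coeff_apply]
  unfold HOne
  beta_reduce
  split_ifs with h
  · exact_mod_cast congrArg (Nat.cast : ℕ → ℚ) (natCard_eq_Pc (d 0) (d 1) (d 3))
  · rfl

lemma HUV_coeff (d : Fin 4 →₀ ℕ) :
    MvPowerSeries.coeff d HUV =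
      if d 1 = d 2 then (Pc (d 0) (d 1) (d 3) : ℚ) else 0 := by
  rw [MvPowerSeries.coeff_apply]
  unfold HUV
  beta_reduce
  split_ifs with h
  · exact_mod_cast congrArg (Nat.cast : ℕ → ℚ) (natCard_eq_Pc (d 0) (d 1) (d 3))
  · rfl


theorem H_functional_equation :
    (V - 1 - T * V * (1 - U)) * H =
      T * Z * (V - 1) + T * (Z * (V - 1) - V) * HOne + T * U * V ^ 2 * HUV := by
  apply MvPowerSeries.ext
  intro d
  have expand : (V - 1 - T * V * (1 - U)) * H =
      V * H - H - T * (V * H) + T * (U * (V * H)) := by ring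
  have expandR : T * Z * (V - 1) + T * (Z * (V - 1) - V) * HOne + T * U * V ^ 2 * HUV =
      T * (Z * V) - T * Z + T * (Z * (V * HOne)) - T * (Z * HOne) - T * (V * HOne) +
        T * (U * (V * (V * HUV))) := by ring
  rw [expand, expandR]
  simp only [map_add, map_sub, T, U, V, Z]
  simp only [coeff_X_mul4, MvPowerSeries.coeff_X, H_coeff, HOne_coeff, HUV_coeff]
  simp [Finsupp.tsub_apply, Finsupp.single_apply]
  have hc1 : (d - Finsupp.single 0 1 - Finsupp.single 3 1 = Finsupp.single 2 1) ↔
      (d 0 - 1 = 0 ∧ d 1 = 0 ∧ d 2 = 1 ∧ d 3 - 1 = 0) := by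
    rw [finsupp_eq_iff4]
    simp [Finsupp.tsub_apply, Finsupp.single_apply]
  have hc2 : (d - Finsupp.single 0 1 = Finsupp.single 3 1) ↔
      (d 0 - 1 = 0 ∧ d 1 = 0 ∧ d 2 = 0 ∧ d 3 = 1) := by
    rw [finsupp_eq_iff4]
    simp [Finsupp.tsub_apply, Finsupp.single_apply]
  simp only [hc1, hc2, ite_collapse]
  simp only [
    show (1 ≤ d 0 ∧ 1 ≤ d 3 ∧ (d 0 - 1 = 0 ∧ d 1 = 0 ∧ d 2 = 1 ∧ d 3 - 1 = 0)) ↔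
      (d 0 = 1 ∧ d 1 = 0 ∧ d 2 = 1 ∧ d 3 = 1) from by omega,
    show (1 ≤ d 0 ∧ (d 0 - 1 = 0 ∧ d 1 = 0 ∧ d 2 = 0 ∧ d 3 = 1)) ↔
      (d 0 = 1 ∧ d 1 = 0 ∧ d 2 = 0 ∧ d 3 = 1) from by omega,
    show (1 ≤ d 0 ∧ 1 ≤ d 3 ∧ 1 ≤ d 2 ∧ d 2 - 1 = 0) ↔
      (1 ≤ d 0 ∧ d 2 = 1 ∧ 1 ≤ d 3) from by omega,
    show (1 ≤ d 0 ∧ 1 ≤ d 3 ∧ d 2 = 0) ↔ (1 ≤ d 0 ∧ d 2 = 0 ∧ 1 ≤ d 3) from by omega,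
    show (1 ≤ d 0 ∧ 1 ≤ d 2 ∧ d 2 - 1 = 0) ↔ (1 ≤ d 0 ∧ d 2 = 1) from by omega,
    show (1 ≤ d 0 ∧ 1 ≤ d 1 ∧ 1 ≤ d 2 ∧ 1 ≤ d 2 - 1 ∧ d 1 - 1 = d 2 - 1 - 1) ↔
      (1 ≤ d 0 ∧ 1 ≤ d 1 ∧ 2 ≤ d 2 ∧ d 1 - 1 = d 2 - 2) from by omega]
  exact key (d 0) (d 1) (d 2) (d 3)
end
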